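/- Let A > 0, δ ∈ (0, π/2), and let α : D⁻_{A,δ} → ℂ² be continuous, analytic on the interior of D⁻_{A,δ}, and satisfy F₀(α(τ)) = α(τ+1) for every τ with τ, τ+1 ∈ D⁻_{A,δ}. Then there exists a unique analytic map α̃ : ℂ ∖ [0,∞) → ℂ² such that α̃ agrees with α on the interior of D⁻_{A,δ} and F₀(α̃(τ)) = α̃(τ+1) for every τ with τ, τ+1 ∈ ℂ ∖ [0,∞). -/

import Mathlib

noncomputable section

/-- The polynomial map `F₀` on `ℂ²`. -/
def F0c : ℂ × ℂ → ℂ × ℂ := fun p =>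
  (p.1 + p.2 + 2 * p.1 ^ 2 - 2 * p.1 * p.2 - p.2 ^ 2 / 2 - 8 * p.1 ^ 3
      - 4 * p.1 ^ 2 * p.2 - 8 * p.1 ^ 4,
   p.2 - 4 * p.1 * p.2 - p.2 ^ 2 - 16 * p.1 ^ 3 - 8 * p.1 ^ 2 * p.2 - 16 * p.1 ^ 4)

/-- `D⁻_{A,δ} = {z ∈ ℂ : z ≠ -A and |arg(z+A)| ≥ δ}` (principal argument). -/
def Dminus (A δ : ℝ) : Set ℂ :=
  {z : ℂ | z ≠ -(A : ℂ) ∧ δ ≤ |Complex.arg (z + A)|}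

/-- The slit plane `ℂ ∖ [0,∞)`. -/
def slitC : Set ℂ := {z : ℂ | z.im ≠ 0 ∨ z.re < 0}

lemma abs_arcsin (x : ℝ) : |Real.arcsin x| = Real.arcsin |x| := by
  rcases le_or_gt 0 x with h | h
  · rw [abs_of_nonneg h, abs_of_nonneg (Real.arcsin_nonneg.2 h)]
  · have e : Real.arcsin x = -(Real.arcsin (-x)) := by rw [Real.arcsin_neg, neg_neg]
    rw [abs_of_neg h, e, abs_neg, abs_of_nonneg (Real.arcsin_nonneg.2 (by linarith))]

lemma sector_add_one {δ : ℝ} (hδ : 0 < δ) (hδ2 : δ < Real.pi / 2) {v : ℂ}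
    (hv : |Complex.arg v| < δ) : |Complex.arg (v + 1)| < δ := by
  rcases eq_or_ne v 0 with rfl | h0
  · simpa [Complex.arg_one] using hδ
  · have hre : 0 < v.re := by
      rcases Complex.abs_arg_lt_pi_div_two_iff.1 (hv.trans hδ2) with h | h
      · exact h
      · exact absurd h h0
    have hre1 : 0 ≤ (v + 1).re := by
      simp only [Complex.add_re, Complex.one_re]; linarith
    have hav : 0 < ‖v‖ := norm_pos_iff.mpr h0
    have habs : ‖v‖ ≤ ‖v + 1‖ := by
      have h1 : (‖v‖) ^ 2 ≤ (‖v + 1‖) ^ 2 := by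
        rw [Complex.sq_norm, Complex.sq_norm, Complex.normSq_apply, Complex.normSq_apply]
        simp only [Complex.add_re, Complex.add_im, Complex.one_re, Complex.one_im]
        nlinarith
      have := Real.sqrt_le_sqrt h1
      rwa [Real.sqrt_sq hav.le, Real.sqrt_sq (norm_nonneg _)] at this
    have hav1 : 0 < ‖v + 1‖ := lt_of_lt_of_le hav habs
    rw [Complex.arg_of_re_nonneg hre.le, abs_arcsin] at hv
    rw [Complex.arg_of_re_nonneg hre1, abs_arcsin]
    refine lt_of_le_of_lt ?_ hv
    apply Real.monotone_arcsin
    rw [abs_div, abs_div, abs_of_nonneg hav.le, abs_of_nonneg hav1.le,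
      Complex.add_im, Complex.one_im, add_zero]
    gcongr

lemma Dminus_sub_one {A δ : ℝ} (hδ : 0 < δ) (hδ2 : δ < Real.pi / 2) {z : ℂ}
    (hz : z ∈ Dminus A δ) : z - 1 ∈ Dminus A δ := by
  obtain ⟨h1, h2⟩ := hz
  constructor
  · intro h
    have e : z + A = 1 := by
      have : z = 1 - A := by linear_combination h
      rw [this]; ring
    rw [e, Complex.arg_one] at h2
    simp at h2; linarith
  · by_contra h
    push_neg at h
    have h' := sector_add_one hδ hδ2 (v := z - 1 + A) h
    have e : z - 1 + A + 1 = z + A := by ring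
    rw [e] at h'
    linarith

lemma Dminus_sub_nat {A δ : ℝ} (hδ : 0 < δ) (hδ2 : δ < Real.pi / 2) {z : ℂ}
    (hz : z ∈ Dminus A δ) (n : ℕ) : z - n ∈ Dminus A δ := by
  induction n with
  | zero => simpa using hz
  | succ k ih =>
    have h := Dminus_sub_one hδ hδ2 ih
    have e : z - (k : ℂ) - 1 = z - ((k + 1 : ℕ) : ℂ) := by push_cast; ring
    rwa [e] at h

lemma re_neg_mem_Dminus {A δ : ℝ} (hδ2 : δ < Real.pi / 2) {z : ℂ}
    (hz : (z + A).re < 0) : z ∈ Dminus A δ := by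
  constructor
  · intro h
    rw [h] at hz
    simp at hz
  · have h : ¬ |Complex.arg (z + A)| ≤ Real.pi / 2 := by
      rw [Complex.abs_arg_le_pi_div_two_iff]; linarith
    push_neg at h; linarith

lemma F0c_differentiable : Differentiable ℂ F0c := by
  unfold F0c
  fun_prop

lemma isOpen_slitC : IsOpen slitC := by
  have : slitC = {z : ℂ | z.im ≠ 0} ∪ {z : ℂ | z.re < 0} := by
    ext z; simp [slitC, Set.mem_union]
  rw [this]
  exact (isOpen_aux).union (isOpen_lt Complex.continuous_re continuous_const)
where isOpen_aux : IsOpen {z : ℂ | z.im ≠ 0} := isOpen_compl_singleton.preimage Complex.continuous_im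

lemma isPreconnected_slitC : IsPreconnected slitC := by
  have hP : IsPreconnected {z : ℂ | 0 < z.im} := (convex_halfSpace_im_gt 0).isPreconnected
  have hQ : IsPreconnected {z : ℂ | z.im < 0} := (convex_halfSpace_im_lt 0).isPreconnected
  have hL : IsPreconnected {z : ℂ | z.re < 0} := (convex_halfSpace_re_lt 0).isPreconnected
  have h1 : IsPreconnected ({z : ℂ | 0 < z.im} ∪ {z : ℂ | z.re < 0}) := by
    apply IsPreconnected.union (-1 + Complex.I) _ _ hP hL
    · simp
    · simp
  have h2 : IsPreconnected (({z : ℂ | 0 < z.im} ∪ {z : ℂ | z.re < 0}) ∪ {z : ℂ | z.im < 0}) := by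
    apply IsPreconnected.union (-1 - Complex.I) _ _ h1 hQ
    · right; simp
    · simp
  have e : slitC = ({z : ℂ | 0 < z.im} ∪ {z : ℂ | z.re < 0}) ∪ {z : ℂ | z.im < 0} := by
    ext z
    simp only [slitC, Set.mem_setOf_eq, Set.mem_union]
    constructor
    · rintro (h | h)
      · rcases lt_or_gt_of_ne h with h' | h'
        · exact Or.inr h'
        · exact Or.inl (Or.inl h')
      · exact Or.inl (Or.inr h)
    · rintro ((h | h) | h)
      · exact Or.inl (ne_of_gt h)
      · exact Or.inr h
      · exact Or.inl (ne_of_lt h)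
  rw [e]; exact h2

/-- Unique analytic continuation of a separatrix of `F₀` from `D⁻_{A,δ}` to the
slit plane `ℂ ∖ [0,∞)`, still satisfying `F₀(α̃(τ)) = α̃(τ+1)`. -/
theorem separatrix_analytic_continuation (A δ : ℝ) (hA : 0 < A)
    (hδ : 0 < δ) (hδ2 : δ < Real.pi / 2) (α : ℂ → ℂ × ℂ)
    (hc : ContinuousOn α (Dminus A δ))
    (hd : DifferentiableOn ℂ α (interior (Dminus A δ)))
    (heq : ∀ τ : ℂ, τ ∈ Dminus A δ → τ + 1 ∈ Dminus A δ → F0c (α τ) = α (τ + 1)) :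
    ∃ αt : ℂ → ℂ × ℂ,
      (DifferentiableOn ℂ αt slitC ∧
        Set.EqOn αt α (interior (Dminus A δ)) ∧
        ∀ τ : ℂ, τ ∈ slitC → τ + 1 ∈ slitC → F0c (αt τ) = αt (τ + 1)) ∧
      ∀ αt' : ℂ → ℂ × ℂ,
        (DifferentiableOn ℂ αt' slitC ∧
          Set.EqOn αt' α (interior (Dminus A δ)) ∧
          ∀ τ : ℂ, τ ∈ slitC → τ + 1 ∈ slitC → F0c (αt' τ) = αt' (τ + 1)) →
        Set.EqOn αt αt' slitC := by
  -- the half-plane `{(z+A).re < 0}` sits inside the interior of `Dminus A δ`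
  have hUopen : IsOpen {z : ℂ | (z + (A : ℂ)).re < 0} :=
    isOpen_lt (Complex.continuous_re.comp (continuous_id.add continuous_const)) continuous_const
  have hUsub : {z : ℂ | (z + (A : ℂ)).re < 0} ⊆ interior (Dminus A δ) :=
    interior_maximal (fun z hz => re_neg_mem_Dminus hδ2 hz) hUopen
  -- pulling back along the dynamics
  have key : ∀ (k : ℕ) (σ : ℂ), σ ∈ Dminus A δ → F0c^[k] (α (σ - k)) = α σ := by
    intro k
    induction k with
    | zero => intro σ hσ; simp
    | succ k ih =>
      intro σ hσ
      rw [Function.iterate_succ_apply]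
      have hτ : σ - ((k + 1 : ℕ) : ℂ) ∈ Dminus A δ := Dminus_sub_nat hδ hδ2 hσ (k + 1)
      have hτ1 : σ - ((k + 1 : ℕ) : ℂ) + 1 = σ - (k : ℕ) := by push_cast; ring
      have h2 : σ - ((k + 1 : ℕ) : ℂ) + 1 ∈ Dminus A δ := by
        rw [hτ1]; exact Dminus_sub_nat hδ hδ2 hσ k
      rw [heq _ hτ h2, hτ1]
      exact ih σ hσ
  -- well-definedness of the continuation
  have wd : ∀ (n m : ℕ) (τ : ℂ), τ - n ∈ Dminus A δ → τ - m ∈ Dminus A δ →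
      F0c^[m] (α (τ - m)) = F0c^[n] (α (τ - n)) := by
    have base : ∀ (n m : ℕ), n ≤ m → ∀ τ : ℂ, τ - n ∈ Dminus A δ →
        F0c^[m] (α (τ - m)) = F0c^[n] (α (τ - n)) := by
      intro n m hnm τ hn
      obtain ⟨k, rfl⟩ := Nat.exists_eq_add_of_le hnm
      rw [Function.iterate_add_apply]
      have e : τ - ((n + k : ℕ) : ℂ) = τ - n - k := by push_cast; ring
      rw [e, key k (τ - n) hn]
    intro n m τ hn hm
    rcases le_total n m with h | h
    · exact base n m h τ hn
    · exact (base m n h τ hm).symm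
  -- the continuation
  set N : ℂ → ℕ := fun τ => ⌈τ.re + A⌉₊ + 1 with hNdef
  have hNmem : ∀ τ : ℂ, (τ - N τ + (A : ℂ)).re < 0 := by
    intro τ
    have h1 : τ.re + A ≤ (⌈τ.re + A⌉₊ : ℝ) := Nat.le_ceil _
    simp only [Complex.add_re, Complex.sub_re, Complex.natCast_re, Complex.ofReal_re, hNdef]
    push_cast
    linarith
  have hDN : ∀ τ : ℂ, τ - N τ ∈ Dminus A δ := fun τ => re_neg_mem_Dminus hδ2 (hNmem τ)
  set αt : ℂ → ℂ × ℂ := fun τ => F0c^[N τ] (α (τ - N τ)) with hαt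
  -- agreement with α
  have hEq : Set.EqOn αt α (interior (Dminus A δ)) := by
    intro τ hτ
    have hτD : τ ∈ Dminus A δ := interior_subset hτ
    have h0 : τ - ((0 : ℕ) : ℂ) ∈ Dminus A δ := by simpa using hτD
    have := wd 0 (N τ) τ h0 (hDN τ)
    simpa using this
  -- functional equation (in fact everywhere)
  have hFeq : ∀ τ : ℂ, F0c (αt τ) = αt (τ + 1) := by
    intro τ
    have e : τ + 1 - ((N τ + 1 : ℕ) : ℂ) = τ - N τ := by push_cast; ring
    have h1 : τ + 1 - ((N τ + 1 : ℕ) : ℂ) ∈ Dminus A δ := by rw [e]; exact hDN τ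
    have step : F0c (αt τ) = F0c^[N τ + 1] (α (τ + 1 - ((N τ + 1 : ℕ) : ℂ))) := by
      rw [e, hαt, Function.iterate_succ_apply']
    rw [step]
    exact (wd (N (τ + 1)) (N τ + 1) (τ + 1) (hDN (τ + 1)) h1)
  -- differentiability
  have hDiffAt : ∀ τ₀ : ℂ, DifferentiableAt ℂ αt τ₀ := by
    intro τ₀
    set m : ℕ := ⌈τ₀.re + A⌉₊ + 2 with hm
    have hball : ∀ τ ∈ Metric.ball τ₀ (1 : ℝ), (τ - (m : ℂ) + (A : ℂ)).re < 0 := by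
      intro τ hτ
      have hre : |τ.re - τ₀.re| ≤ dist τ τ₀ := by
        have h := Complex.abs_re_le_norm (τ - τ₀)
        simpa [Complex.dist_eq, Complex.sub_re] using h
      have hd1 : dist τ τ₀ < 1 := hτ
      have h1 : τ₀.re + A ≤ (⌈τ₀.re + A⌉₊ : ℝ) := Nat.le_ceil _
      have h2 := abs_le.1 hre
      simp only [Complex.add_re, Complex.sub_re, Complex.natCast_re, Complex.ofReal_re, hm]
      push_cast
      linarith [h2.2]
    have hmem : ∀ τ ∈ Metric.ball τ₀ (1 : ℝ), τ - (m : ℂ) ∈ interior (Dminus A δ) :=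
      fun τ hτ => hUsub (hball τ hτ)
    have hg : DifferentiableAt ℂ (fun τ : ℂ => F0c^[m] (α (τ - (m : ℂ)))) τ₀ := by
      have hα : DifferentiableAt ℂ α (τ₀ - (m : ℂ)) :=
        hd.differentiableAt (isOpen_interior.mem_nhds
          (hmem τ₀ (Metric.mem_ball_self one_pos)))
      have hsub : DifferentiableAt ℂ (fun τ : ℂ => τ - (m : ℂ)) τ₀ :=
        (differentiable_id.sub_const _).differentiableAt
      exact ((F0c_differentiable.iterate m).differentiableAt).comp τ₀ (hα.comp τ₀ hsub)
    have hEv : αt =ᶠ[nhds τ₀] fun τ : ℂ => F0c^[m] (α (τ - (m : ℂ))) := by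
      filter_upwards [Metric.ball_mem_nhds τ₀ one_pos] with τ hτ
      exact (wd (N τ) m τ (hDN τ) (re_neg_mem_Dminus hδ2 (hball τ hτ))).symm
    exact hg.congr_of_eventuallyEq hEv
  have hDiffOn : DifferentiableOn ℂ αt slitC :=
    fun z _ => (hDiffAt z).differentiableWithinAt
  refine ⟨αt, ⟨hDiffOn, hEq, fun τ _ _ => hFeq τ⟩, ?_⟩
  -- uniqueness
  rintro αt' ⟨hd', hEq', -⟩
  have hA1 : AnalyticOnNhd ℂ αt slitC := hDiffOn.analyticOnNhd isOpen_slitC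
  have hA2 : AnalyticOnNhd ℂ αt' slitC := hd'.analyticOnNhd isOpen_slitC
  set z₀ : ℂ := -(A : ℂ) - 1 with hz₀def
  have hz₀U : (z₀ + (A : ℂ)).re < 0 := by
    simp [hz₀def]
    linarith
  have hz₀s : z₀ ∈ slitC := by
    right
    simp [hz₀def]
    linarith
  have hnh : interior (Dminus A δ) ∈ nhds z₀ := isOpen_interior.mem_nhds (hUsub hz₀U)
  have hfg : αt =ᶠ[nhds z₀] αt' :=
    Filter.eventuallyEq_of_mem hnh (fun z hz => (hEq hz).trans (hEq' hz).symm)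
  exact hA1.eqOn_of_preconnected_of_eventuallyEq hA2 isPreconnected_slitC hz₀s hfg
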